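/- Let $a_1,a_2\in\mathbb{R}$, $\alpha,\beta>0$, and $\sigma_1,\sigma_2\in\mathbb{R}$ with $s^2:=\sigma_1^2+\sigma_2^2>0$. On $(0,1)$ define the drift $\mu(x)=\beta(1-x)-\alpha x+x(1-x)\big((a_1-\sigma_1^2 x)-(a_2-\sigma_2^2(1-x))\big)$ and the diffusion coefficient $v(x)=s^2\,x^2(1-x)^2$. Set $\alpha_1=\dfrac{2\sigma_1^2}{s^2}$, $\alpha_2=\dfrac{2\sigma_2^2}{s^2}$, $\widehat\beta=\dfrac{2}{s^2}(a_1-a_2+\beta-\alpha)$, and define $\rho(x)=x^{\widehat\beta-\alpha_1}(1-x)^{-\widehat\beta-\alpha_2}\exp\!\left(-\dfrac{2}{s^2}\left(\dfrac{\beta}{x}+\dfrac{\alpha}{1-x}\right)\right)$ for $x\in(0,1)$. Then for every $x\in(0,1)$, $\dfrac{d}{dx}\!\left(\tfrac12 v(x)\rho(x)\right)=\mu(x)\rho(x)$; consequently $\rho$ solves the stationary Fokker–Planck equation $-\dfrac{d}{dx}\big(\mu(x)\rho(x)\big)+\dfrac12\dfrac{d^2}{dx^2}\big(v(x)\rho(x)\big)=0$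 on $(0,1)$. -/

import Mathlib

/-- **The explicit invariant density solves the stationary Fokker–Planck equation.**
For the two-patch proportion diffusion on `(0,1)` with drift `μ` and diffusion
coefficient `v`, the (unnormalized) density
`ρ x = x^(β̂-α₁) (1-x)^(-β̂-α₂) exp(-(2/s²)(β/x + α/(1-x)))`
satisfies `(½ v ρ)' = μ ρ` on `(0,1)`, and consequently
`-(μρ)' + ½ (vρ)'' = 0` on `(0,1)`. -/
theorem invariant_density_solves_fokker_planck (a₁ a₂ α β σ₁ σ₂ : ℝ)
    (hα : 0 < α) (hβ : 0 < β) (hs : 0 < σ₁ ^ 2 + σ₂ ^ 2)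
    (μ v ρ : ℝ → ℝ)
    (hμ : ∀ x : ℝ, μ x = β * (1 - x) - α * x +
      x * (1 - x) * ((a₁ - σ₁ ^ 2 * x) - (a₂ - σ₂ ^ 2 * (1 - x))))
    (hv : ∀ x : ℝ, v x = (σ₁ ^ 2 + σ₂ ^ 2) * x ^ 2 * (1 - x) ^ 2)
    (hρ : ∀ x ∈ Set.Ioo (0 : ℝ) 1, ρ x =
      x ^ ((2 / (σ₁ ^ 2 + σ₂ ^ 2)) * (a₁ - a₂ + β - α) - 2 * σ₁ ^ 2 / (σ₁ ^ 2 + σ₂ ^ 2)) *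
      (1 - x) ^ (-((2 / (σ₁ ^ 2 + σ₂ ^ 2)) * (a₁ - a₂ + β - α)) - 2 * σ₂ ^ 2 / (σ₁ ^ 2 + σ₂ ^ 2)) *
      Real.exp (-(2 / (σ₁ ^ 2 + σ₂ ^ 2)) * (β / x + α / (1 - x)))) :
    (∀ x ∈ Set.Ioo (0 : ℝ) 1,
      HasDerivAt (fun y => (1 / 2 : ℝ) * v y * ρ y) (μ x * ρ x) x) ∧
    (∀ x ∈ Set.Ioo (0 : ℝ) 1,
      -(deriv (fun y => μ y * ρ y) x) +
        (1 / 2 : ℝ) * deriv (deriv (fun y => v y * ρ y)) x = 0) := by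
  set s := σ₁ ^ 2 + σ₂ ^ 2 with hsdef
  have hs0 : s ≠ 0 := ne_of_gt hs
  have main : ∀ x ∈ Set.Ioo (0 : ℝ) 1,
      HasDerivAt (fun y => (1 / 2 : ℝ) * v y * ρ y) (μ x * ρ x) x := by
    intro x hx
    obtain ⟨hx0, hx1⟩ := hx
    have h1x : (0:ℝ) < 1 - x := by linarith
    set p := 2 / s * (a₁ - a₂ + β - α) - 2 * σ₁ ^ 2 / s with hp
    set q := -(2 / s * (a₁ - a₂ + β - α)) - 2 * σ₂ ^ 2 / s with hq
    have hsub : HasDerivAt (fun y : ℝ => 1 - y) (-1) x := by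
      simpa using (hasDerivAt_id x).const_sub 1
    have hA : HasDerivAt (fun y : ℝ => y ^ p) (p * x ^ (p - 1)) x :=
      Real.hasDerivAt_rpow_const (Or.inl hx0.ne')
    have hB : HasDerivAt (fun y : ℝ => (1 - y) ^ q) (q * (1 - x) ^ (q - 1) * (-1)) x :=
      (Real.hasDerivAt_rpow_const (p := q) (Or.inl h1x.ne')).comp x hsub
    have hinv1 : HasDerivAt (fun y : ℝ => β / y) (β * (-(x ^ 2)⁻¹)) x := by
      simpa [div_eq_mul_inv] using (hasDerivAt_inv hx0.ne').const_mul β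
    have hinv2 : HasDerivAt (fun y : ℝ => α / (1 - y)) (α * (-((1 - x) ^ 2)⁻¹ * (-1))) x := by
      simpa [div_eq_mul_inv] using ((hasDerivAt_inv h1x.ne').comp x hsub).const_mul α
    have hgd : HasDerivAt (fun y : ℝ => -(2 / s) * (β / y + α / (1 - y)))
        (-(2 / s) * (β * (-(x ^ 2)⁻¹) + α * (-((1 - x) ^ 2)⁻¹ * (-1)))) x :=
      (hinv1.add hinv2).const_mul _
    have hE := hgd.exp
    have hx2 : HasDerivAt (fun y : ℝ => y ^ 2) (2 * x) x := by
      simpa using hasDerivAt_pow 2 x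
    have h1x2 : HasDerivAt (fun y : ℝ => (1 - y) ^ 2) (2 * (1 - x) * (-1)) x := by
      exact (hsub.pow 2).congr_deriv (by norm_num)
    have h₁ := hx2.const_mul ((1/2 : ℝ) * s)
    have h₅ := (((h₁.mul h1x2).mul hA).mul hB).mul hE
    have heq : (fun y => (1 / 2 : ℝ) * v y * ρ y) =ᶠ[nhds x]
        (fun y => (1/2 : ℝ) * s * y ^ 2 * (1 - y) ^ 2 * y ^ p * (1 - y) ^ q *
          Real.exp (-(2 / s) * (β / y + α / (1 - y)))) := by
      refine Filter.eventuallyEq_of_mem (isOpen_Ioo.mem_nhds ⟨hx0, hx1⟩) (fun y hy => ?_)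
      simp only [hv, hρ y hy]
      ring
    have hF := HasDerivAt.congr_of_eventuallyEq h₅ heq
    refine HasDerivAt.congr_deriv hF ?_
    symm
    simp only [Pi.mul_apply]
    rw [hμ, hρ x ⟨hx0, hx1⟩, Real.rpow_sub hx0 p 1, Real.rpow_sub h1x q 1, Real.rpow_one,
      Real.rpow_one, hp, hq, hsdef]
    have hs1 : σ₁ ^ 2 + σ₂ ^ 2 ≠ 0 := hs0
    field_simp [hs1]
    ring
  refine ⟨main, fun x hx => ?_⟩
  have hder : ∀ y ∈ Set.Ioo (0:ℝ) 1,
      deriv (fun z => v z * ρ z) y = 2 * (μ y * ρ y) := by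
    intro y hy
    have h := (main y hy).const_mul 2
    have hfun : (fun z => (2:ℝ) * ((1/2 : ℝ) * v z * ρ z)) = fun z => v z * ρ z := by
      funext z; ring
    rw [hfun] at h
    exact h.deriv
  have heq : deriv (fun z => v z * ρ z) =ᶠ[nhds x] fun y => 2 * (μ y * ρ y) :=
    Filter.eventuallyEq_of_mem (isOpen_Ioo.mem_nhds hx) hder
  rw [heq.deriv_eq, deriv_const_mul_field]
  ring
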